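/- Let ρ_AB be a bipartite density operator, {E^j}_{j∈J} a nonempty finite family of binary-outcome POVMs E^j = {E^j_0, E^j_1} on B, and k ≥ 0 a real number such that for every POVM-measurement M on A (with outcomes in J) there is a probability distribution σ on J with M(ρ_AB) ≤ 2^k · σ ⊗ ρ_B. Then the adaptive success probability max over POVMs {F_j} on A of Σ_j Tr((F_j ⊗ E^j_1) ρ_AB) is at most 2^k · max_j Tr(E^j_1 ρ_B). -/

import Mathlib

open scoped Kronecker ComplexOrder
open Matrix

noncomputable section

/-- Partial trace over the first (A) register. -/
def ptraceFst {α β : Type*} [Fintype α] (ρ : Matrix (α × β) (α × β) ℂ) : Matrix β β ℂ :=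
  fun i j => ∑ a, ρ (a, i) (a, j)

/-- The measurement map `M(ρ) = Σ_j |j⟩⟨j| ⊗ Tr_A((F_j ⊗ id) ρ)` on a bipartite state,
given a POVM `F` on the first register. -/
def measFirst {α β X : Type*} [Fintype α] [Fintype β] [DecidableEq β] [DecidableEq X]
    (F : X → Matrix α α ℂ) (ρ : Matrix (α × β) (α × β) ℂ) : Matrix (X × β) (X × β) ℂ :=
  fun p q => if p.1 = q.1 then ptraceFst ((F p.1 ⊗ₖ (1 : Matrix β β ℂ)) * ρ) p.2 q.2 else 0

/-- The cq-state `σ ⊗ ρ_B` for a classical distribution `σ` on outcomes. -/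
def cqState {β X : Type*} [DecidableEq X] (σ : X → ℝ) (ρB : Matrix β β ℂ) : Matrix (X × β) (X × β) ℂ :=
  fun p q => if p.1 = q.1 then (σ p.1 : ℂ) * ρB p.2 q.2 else 0

lemma block_quad {β X : Type*} [Fintype β] [Fintype X] [DecidableEq X]
    {D : Matrix (X × β) (X × β) ℂ} (hD : D.PosSemidef) (j : X) (x : β → ℂ) :
    0 ≤ star x ⬝ᵥ (Matrix.of fun p q => D (j,p) (j,q)) *ᵥ x := by
  have h := hD.dotProduct_mulVec_nonneg (fun p : X × β => if p.1 = j then x p.2 else 0)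
  convert h using 1
  simp [dotProduct, mulVec, Fintype.sum_prod_type, apply_ite, mul_comm]

lemma trace_mul_nonneg_of_quad {β : Type*} [Fintype β]
    {E B : Matrix β β ℂ} (hE : E.PosSemidef)
    (hB : ∀ x : β → ℂ, 0 ≤ star x ⬝ᵥ B *ᵥ x) : 0 ≤ (E * B).trace := by
  classical
  open MatrixOrder Matrix.Norms.L2Operator in
  obtain ⟨C, hC⟩ := CStarAlgebra.nonneg_iff_eq_star_mul_self.mp hE.nonneg
  rw [Matrix.star_eq_conjTranspose] at hC
  subst hC
  have : (Cᴴ * C * B).trace = ∑ i, star (fun q => star (C i q)) ⬝ᵥ B *ᵥ (fun q => star (C i q)) := by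
    rw [mul_assoc, Matrix.trace_mul_comm]
    refine Finset.sum_congr rfl fun i _ => ?_
    simp [Matrix.mul_apply, dotProduct, mulVec, Finset.mul_sum, Finset.sum_mul]
    rw [Finset.sum_comm]
    exact Finset.sum_congr rfl fun p _ => Finset.sum_congr rfl fun q _ => by ring
  rw [this]
  exact Finset.sum_nonneg fun i _ => hB _

lemma trace_kron {α β : Type*} [Fintype α] [Fintype β] [DecidableEq α] [DecidableEq β]
    (F : Matrix α α ℂ) (E : Matrix β β ℂ) (ρ : Matrix (α × β) (α × β) ℂ) :
    ((F ⊗ₖ E) * ρ).trace = (E * ptraceFst ((F ⊗ₖ (1 : Matrix β β ℂ)) * ρ)).trace := by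
  have h1 : (F ⊗ₖ E) = ((1 : Matrix α α ℂ) ⊗ₖ E) * (F ⊗ₖ (1 : Matrix β β ℂ)) := by
    rw [← Matrix.mul_kronecker_mul, Matrix.one_mul, Matrix.mul_one]
  rw [h1, mul_assoc]
  generalize (F ⊗ₖ (1 : Matrix β β ℂ)) * ρ = M
  simp only [Matrix.trace, Matrix.diag, Matrix.mul_apply, ptraceFst, kroneckerMap_apply,
    Fintype.sum_prod_type, Matrix.one_apply, Finset.mul_sum, Finset.sum_mul,
    ite_mul, one_mul, zero_mul, Finset.sum_ite_eq, Finset.mem_univ, if_true]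
  trans ∑ x : α, ∑ x1 : β, ∑ x3 : β, E x1 x3 * M (x, x3) (x, x1)
  · refine Finset.sum_congr rfl fun x _ => Finset.sum_congr rfl fun x1 _ => ?_
    rw [Finset.sum_comm]
    simp [Finset.sum_ite_eq]
  · rw [Finset.sum_comm]
    refine Finset.sum_congr rfl fun p _ => ?_
    rw [Finset.sum_comm]

theorem stmt2 {a b : ℕ} {J : Type} [Fintype J] [Nonempty J] [DecidableEq J]
    (ρ : Matrix (Fin a × Fin b) (Fin a × Fin b) ℂ) (hρ : ρ.PosSemidef) (htr : ρ.trace = 1)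
    (E1 : J → Matrix (Fin b) (Fin b) ℂ)
    (hE1 : ∀ j, (E1 j).PosSemidef) (hE0 : ∀ j, ((1 : Matrix (Fin b) (Fin b) ℂ) - E1 j).PosSemidef)
    (k : ℝ) (hk : 0 ≤ k)
    (hImax : ∀ F : J → Matrix (Fin a) (Fin a) ℂ,
      (∀ j, (F j).PosSemidef) → ∑ j, F j = 1 →
      ∃ σ : J → ℝ, (∀ j, 0 ≤ σ j) ∧ ∑ j, σ j = 1 ∧
        (((2 : ℝ) ^ k) • cqState σ (ptraceFst ρ) - measFirst F ρ).PosSemidef) :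
    ∀ F : J → Matrix (Fin a) (Fin a) ℂ, (∀ j, (F j).PosSemidef) → ∑ j, F j = 1 →
      (∑ j, ((F j ⊗ₖ E1 j) * ρ).trace.re)
        ≤ (2 : ℝ) ^ k *
            Finset.univ.sup' Finset.univ_nonempty (fun j => ((E1 j * ptraceFst ρ)).trace.re) := by
  intro F hF hFsum
  obtain ⟨σ, hσ0, hσ1, hPSD⟩ := hImax F hF hFsum
  set ρB := ptraceFst ρ with hρB
  set Msup := Finset.univ.sup' Finset.univ_nonempty (fun j => ((E1 j * ρB)).trace.re) with hM
  have h2k : (0:ℝ) ≤ (2:ℝ)^k := by positivity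
  have key : ∀ j, ((F j ⊗ₖ E1 j) * ρ).trace.re ≤ ((2:ℝ)^k * σ j) * (E1 j * ρB).trace.re := by
    intro j
    set X := ptraceFst ((F j ⊗ₖ (1 : Matrix (Fin b) (Fin b) ℂ)) * ρ) with hX
    have hquad : ∀ x : Fin b → ℂ,
        0 ≤ star x ⬝ᵥ ((((2:ℝ)^k * σ j) • ρB - X) *ᵥ x) := by
      intro x
      have h := block_quad hPSD j x
      convert h using 3
      ext p q
      simp [cqState, measFirst, Matrix.sub_apply, Matrix.smul_apply, Complex.real_smul, hX]
      ring
    have h0 := trace_mul_nonneg_of_quad (hE1 j) hquad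
    have h0re : (0:ℝ) ≤ ((E1 j) * (((2:ℝ)^k * σ j) • ρB - X)).trace.re :=
      (Complex.le_def.mp h0).1
    have hexp : ((E1 j) * (((2:ℝ)^k * σ j) • ρB - X)).trace.re
        = ((2:ℝ)^k * σ j) * (E1 j * ρB).trace.re - (E1 j * X).trace.re := by
      rw [Matrix.mul_sub, Matrix.mul_smul, Matrix.trace_sub, Matrix.trace_smul]
      simp [Complex.sub_re, Complex.smul_re]
    rw [trace_kron, ← hX]
    rw [hexp] at h0re
    linarith
  calc (∑ j, ((F j ⊗ₖ E1 j) * ρ).trace.re)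
      ≤ ∑ j, ((2:ℝ)^k * σ j) * (E1 j * ρB).trace.re :=
        Finset.sum_le_sum fun j _ => key j
    _ ≤ ∑ j, ((2:ℝ)^k * σ j) * Msup := by
        refine Finset.sum_le_sum fun j _ => ?_
        refine mul_le_mul_of_nonneg_left ?_ (mul_nonneg h2k (hσ0 j))
        rw [hM]
        exact Finset.le_sup' (fun j => ((E1 j * ρB)).trace.re) (Finset.mem_univ j)
    _ = (2:ℝ)^k * Msup := by
        rw [← Finset.sum_mul, ← Finset.mul_sum, hσ1, mul_one]
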